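/- arXiv:1810.08417 — 4 statements merged into one kernel-verified Lean document; each statement's English description precedes it below -/
import Mathlib

section
/- Let D = {−1,1}^n and let f(x) = Σ_{a ∈ {0,1}^n} θ_a x^a be a polynomial supported on square-free monomials. Then f is the indicator function of some subset F ⊆ D if and only if for every a ∈ {0,1}^n, θ_a = Σ_{a' ∈ {0,1}^n} θ_{a'} θ_{a + a' mod 2}, where a + a' mod 2 denotes coordinatewise addition modulo 2. -/
open MvPolynomial Finset

noncomputable def tlPoly (n : ℕ) (θ : (Fin n → Fin 2) → ℚ) : MvPolynomial (Fin n) ℚ :=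
  ∑ a : Fin n → Fin 2, C (θ a) * ∏ j, X j ^ (a j : ℕ)

def chi (n : ℕ) (a : Fin n → Fin 2) (d : Fin n → ℚ) : ℚ := ∏ j, d j ^ (a j : ℕ)

lemma eval_tlPoly (n : ℕ) (θ : (Fin n → Fin 2) → ℚ) (d : Fin n → ℚ) :
    eval d (tlPoly n θ) = ∑ a : Fin n → Fin 2, θ a * chi n a d := by
  simp [tlPoly, chi]

lemma pt_aux : ∀ (x y : Fin 2) (c : ℚ), (c = -1 ∨ c = 1) →
    c ^ (x : ℕ) * c ^ (y : ℕ) = c ^ (((x + y : Fin 2)) : ℕ) := by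
  intro x y c hc
  fin_cases x <;> fin_cases y <;> rcases hc with rfl | rfl <;>
    norm_num [show ((1 + 1 : Fin 2) : ℕ) = 0 from rfl, show ((2 : Fin 2) : ℕ) = 0 from rfl]

lemma chi_mul (n : ℕ) (a b : Fin n → Fin 2) (d : Fin n → ℚ)
    (hd : ∀ j, d j = -1 ∨ d j = 1) :
    chi n a d * chi n b d = chi n (a + b) d := by
  unfold chi
  rw [← Finset.prod_mul_distrib]
  exact Finset.prod_congr rfl fun j _ => pt_aux (a j) (b j) (d j) (hd j)

lemma addself (n : ℕ) (a : Fin n → Fin 2) : a + a = 0 := by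
  have h2 : ∀ x : Fin 2, x + x = 0 := by decide
  funext j; exact h2 (a j)

/-- the point of D indexed by s -/
def ds (n : ℕ) (s : Fin n → Fin 2) : Fin n → ℚ := fun j => (-1 : ℚ) ^ (s j : ℕ)

lemma ds_mem (n : ℕ) (s : Fin n → Fin 2) : ∀ j, ds n s j = -1 ∨ ds n s j = 1 := by
  intro j; unfold ds
  rcases (show s j = 0 ∨ s j = 1 from by revert j; exact fun j => by fin_omega) with h | h <;> simp [h]

lemma sum_chi (n : ℕ) (c : Fin n → Fin 2) :
    ∑ s : Fin n → Fin 2, chi n c (ds n s) = if c = 0 then (2 : ℚ) ^ n else 0 := by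
  have hrw : ∀ s : Fin n → Fin 2, chi n c (ds n s)
      = ∏ j, ((-1 : ℚ) ^ ((s j : ℕ) * (c j : ℕ))) := by
    intro s
    unfold chi ds
    exact Finset.prod_congr rfl fun j _ => by rw [← pow_mul]
  simp only [hrw]
  rw [← Fintype.prod_sum (fun j (x : Fin 2) => ((-1 : ℚ)) ^ ((x : ℕ) * (c j : ℕ)))]
  have hfac : ∀ j, (∑ x : Fin 2, ((-1 : ℚ) ^ ((x : ℕ) * (c j : ℕ))))
      = if c j = 0 then 2 else 0 := by
    intro j
    rcases (show c j = 0 ∨ c j = 1 from by fin_omega) with h | h <;>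
      simp [h, Fin.sum_univ_two]
  simp only [hfac]
  by_cases hc : c = 0
  · subst hc; simp
  · rw [if_neg hc]
    obtain ⟨j, hj⟩ := Function.ne_iff.mp hc
    exact Finset.prod_eq_zero (Finset.mem_univ j) (if_neg hj)

lemma key_sq (n : ℕ) (θ : (Fin n → Fin 2) → ℚ) (d : Fin n → ℚ)
    (hd : ∀ j, d j = -1 ∨ d j = 1) :
    (∑ a : Fin n → Fin 2, θ a * chi n a d) * (∑ b : Fin n → Fin 2, θ b * chi n b d)
      = ∑ b : Fin n → Fin 2, (∑ a : Fin n → Fin 2, θ a * θ (b + a)) * chi n b d := by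
  rw [Finset.sum_mul_sum]
  have step1 : ∀ a b : Fin n → Fin 2,
      (θ a * chi n a d) * (θ b * chi n b d) = θ a * θ b * chi n (a + b) d := by
    intro a b
    rw [← chi_mul n a b d hd]; ring
  calc ∑ a : Fin n → Fin 2, ∑ b : Fin n → Fin 2, (θ a * chi n a d) * (θ b * chi n b d)
      = ∑ a : Fin n → Fin 2, ∑ b : Fin n → Fin 2, θ a * θ b * chi n (a + b) d := by
        exact Finset.sum_congr rfl fun a _ => Finset.sum_congr rfl fun b _ => step1 a b
    _ = ∑ a : Fin n → Fin 2, ∑ c : Fin n → Fin 2, θ a * θ (a + c) * chi n c d := by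
        refine Finset.sum_congr rfl fun a _ => ?_
        refine Fintype.sum_equiv (Equiv.addLeft a) _ _ fun c => ?_
        simp only [Equiv.coe_addLeft]
        rw [show a + (a + c) = c by rw [← add_assoc, addself n a, zero_add]]
    _ = ∑ c : Fin n → Fin 2, ∑ a : Fin n → Fin 2, θ a * θ (a + c) * chi n c d :=
        Finset.sum_comm
    _ = ∑ b : Fin n → Fin 2, (∑ a : Fin n → Fin 2, θ a * θ (b + a)) * chi n b d := by
        refine Finset.sum_congr rfl fun c _ => ?_
        rw [Finset.sum_mul]
        exact Finset.sum_congr rfl fun a _ => by rw [add_comm c a]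

lemma bchar_add_eq_zero (n : ℕ) (b c : Fin n → Fin 2) : b + c = 0 ↔ c = b := by
  constructor
  · intro h
    calc c = b + b + c := by rw [addself n b, zero_add]
    _ = b + (b + c) := by rw [add_assoc]
    _ = b := by rw [h, add_zero]
  · rintro rfl; exact addself n _

/-- `f = Σ_{a∈{0,1}ⁿ} θ_a x^a` is the indicator function of some subset `F ⊆ {-1,1}ⁿ`
iff `θ_a = Σ_{a'} θ_{a'} θ_{a+a' mod 2}` for every `a ∈ {0,1}ⁿ`. -/
theorem indicator_iff_theta_relation (n : ℕ) (θ : (Fin n → Fin 2) → ℚ) :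
    (∃ F : Set (Fin n → ℚ), ∀ d : Fin n → ℚ, (∀ j, d j = -1 ∨ d j = 1) →
        ((d ∈ F ∧ eval d (tlPoly n θ) = 1) ∨ (d ∉ F ∧ eval d (tlPoly n θ) = 0))) ↔
    (∀ a : Fin n → Fin 2, θ a = ∑ a' : Fin n → Fin 2, θ a' * θ (a + a')) := by
  constructor
  · rintro ⟨F, hF⟩ b
    set T : (Fin n → Fin 2) → ℚ := fun c => ∑ a : Fin n → Fin 2, θ a * θ (c + a) with hT
    have hval : ∀ s : Fin n → Fin 2,
        (∑ a : Fin n → Fin 2, θ a * chi n a (ds n s)) *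
          (∑ a : Fin n → Fin 2, θ a * chi n a (ds n s))
          = ∑ a : Fin n → Fin 2, θ a * chi n a (ds n s) := by
      intro s
      have h := hF (ds n s) (ds_mem n s)
      rw [eval_tlPoly] at h
      rcases h with ⟨-, h1⟩ | ⟨-, h0⟩
      · rw [h1]; norm_num
      · rw [h0]; norm_num
    have hsq : ∀ s : Fin n → Fin 2,
        ∑ c : Fin n → Fin 2, (T c - θ c) * chi n c (ds n s) = 0 := by
      intro s
      have hk := key_sq n θ (ds n s) (ds_mem n s)
      rw [hval s] at hk
      simp only [sub_mul, Finset.sum_sub_distrib]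
      rw [← hk]
      simp [hT]
    have h1 : ∑ s : Fin n → Fin 2, chi n b (ds n s) *
        (∑ c : Fin n → Fin 2, (T c - θ c) * chi n c (ds n s)) = 0 := by
      simp [hsq]
    have h2 : ∀ s : Fin n → Fin 2, chi n b (ds n s) *
        (∑ c : Fin n → Fin 2, (T c - θ c) * chi n c (ds n s))
        = ∑ c : Fin n → Fin 2, (T c - θ c) * chi n (b + c) (ds n s) := by
      intro s
      rw [Finset.mul_sum]
      refine Finset.sum_congr rfl fun c _ => ?_
      rw [← chi_mul n b c (ds n s) (ds_mem n s)]; ring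
    rw [Finset.sum_congr rfl fun s _ => h2 s, Finset.sum_comm] at h1
    have h3 : ∑ c : Fin n → Fin 2, (T c - θ c) * (if b + c = 0 then (2:ℚ)^n else 0) = 0 := by
      refine Eq.trans ?_ h1
      refine Finset.sum_congr rfl fun c _ => ?_
      rw [← Finset.mul_sum, sum_chi n (b + c)]
    rw [Finset.sum_eq_single b
        (fun c _ hc => by rw [if_neg (fun h => hc ((bchar_add_eq_zero n b c).mp h)), mul_zero])
        (fun hb => absurd (Finset.mem_univ b) hb)] at h3
    rw [if_pos (addself n b)] at h3
    have h4 : T b - θ b = 0 := by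
      have : (2:ℚ)^n ≠ 0 := by positivity
      exact (mul_eq_zero.mp h3).resolve_right this
    have := sub_eq_zero.mp h4
    rw [← this]
  · intro h
    refine ⟨{d | eval d (tlPoly n θ) = 1}, fun d hd => ?_⟩
    have hsq : eval d (tlPoly n θ) * eval d (tlPoly n θ) = eval d (tlPoly n θ) := by
      rw [eval_tlPoly, key_sq n θ d hd]
      exact Finset.sum_congr rfl fun c _ => by rw [← h c]
    by_cases h1 : eval d (tlPoly n θ) = 1
    · exact Or.inl ⟨h1, h1⟩
    · refine Or.inr ⟨h1, ?_⟩
      have h2 : eval d (tlPoly n θ) * (eval d (tlPoly n θ) - 1) = 0 := by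
        rw [mul_sub, hsq]; ring
      rcases mul_eq_zero.mp h2 with h3 | h3
      · exact h3
      · exact absurd (sub_eq_zero.mp h3) h1
end

section
/- Let I = [r_1] × ··· × [r_n] with r_j ≥ 2 and m = ∏ r_j. Define the contrast matrix C with rows indexed by: the constant row 1_m; and for each nonempty J ⊆ [n] with |J| = k and each ĩ ∈ ∏_{j ∈ J}[r_j − 1], the row c_{J(ĩ)} given by c_{J(ĩ)}(i) = 1 if i_J = (ĩ_1,...,ĩ_{k−1},1), c_{J(ĩ)}(i) = −1 if i_J = (ĩ_1,...,ĩ_{k−1},ĩ_k + 1), and 0 otherwise (for k = 1: value 1 if i_J = 1, value −1 if i_J = ĩ + 1, else 0). Then C is a nonsingular m × m matrix. -/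
open Classical in
noncomputable def contrastRow (n : ℕ) (r : Fin n → ℕ)
    (ρ : ∀ j, Option (Fin (r j - 1))) (i : ∀ j, Fin (r j)) : ℚ :=
  let J : Finset (Fin n) := Finset.univ.filter fun j => (ρ j).isSome
  if hJ : J.Nonempty then
    let k := J.max' hJ
    if ∀ j ∈ J, j ≠ k → ∀ h : (ρ j).isSome, (i j : ℕ) = ((ρ j).get h : ℕ) then
      if (i k : ℕ) = 0 then 1
      else if ∀ h : (ρ k).isSome, (i k : ℕ) = ((ρ k).get h : ℕ) + 1 then -1
      else 0
    else 0
  else 1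

/-- Indicator-style basis functions on one coordinate. -/
noncomputable def bFun (m : ℕ) (σ : Option (Fin (m - 1))) (x : Fin m) : ℚ :=
  match σ with
  | none => 1
  | some t => if (x : ℕ) = (t : ℕ) then 1 else 0

/-- Contrast-style basis functions on one coordinate. -/
noncomputable def aFun (m : ℕ) (σ : Option (Fin (m - 1))) (x : Fin m) : ℚ :=
  match σ with
  | none => 1
  | some t => (if (x : ℕ) = 0 then 1 else 0) - (if (x : ℕ) = (t : ℕ) + 1 then 1 else 0)

open Classical in
/-- The full indicator ("cell means") row. -/
noncomputable def dRow (n : ℕ) (r : Fin n → ℕ)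
    (ρ : ∀ j, Option (Fin (r j - 1))) (i : ∀ j, Fin (r j)) : ℚ :=
  if ∀ j, ∀ t : Fin (r j - 1), ρ j = some t → (i j : ℕ) = (t : ℕ) then 1 else 0

lemma optcond {α : Type*} (o : Option α) (P : α → Prop) :
    (∀ h : o.isSome, P (o.get h)) ↔ ∀ t, o = some t → P t := by
  cases o <;> simp

open Classical in
/-- Normal form for `contrastRow` avoiding `Option.get` and membership. -/
lemma contrastRow_eq (n : ℕ) (r : Fin n → ℕ)
    (ρ : ∀ j, Option (Fin (r j - 1))) (i : ∀ j, Fin (r j)) :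
    contrastRow n r ρ i =
      if hJ : (Finset.univ.filter fun j => (ρ j).isSome).Nonempty then
        (if ∀ j, j ≠ (Finset.univ.filter fun j => (ρ j).isSome).max' hJ →
            ∀ t, ρ j = some t → (i j : ℕ) = (t : ℕ) then
          (if (i ((Finset.univ.filter fun j => (ρ j).isSome).max' hJ) : ℕ) = 0 then 1
           else if ∀ t, ρ ((Finset.univ.filter fun j => (ρ j).isSome).max' hJ) = some t →
              (i ((Finset.univ.filter fun j => (ρ j).isSome).max' hJ) : ℕ) = (t : ℕ) + 1 then -1
           else 0)
        else 0)
      else 1 := by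
  by_cases hJ : (Finset.univ.filter fun j => (ρ j).isSome).Nonempty
  · rw [contrastRow]
    simp only [dif_pos hJ]
    set k := (Finset.univ.filter fun j => (ρ j).isSome).max' hJ with hk
    have h1 : (∀ j ∈ Finset.univ.filter fun j => (ρ j).isSome, j ≠ k →
        ∀ h : (ρ j).isSome, (i j : ℕ) = ((ρ j).get h : ℕ)) ↔
        (∀ j, j ≠ k → ∀ t, ρ j = some t → (i j : ℕ) = (t : ℕ)) := by
      constructor
      · intro h j hne t ht
        have hm : j ∈ Finset.univ.filter fun j => (ρ j).isSome := by simp [ht]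
        have hs : (ρ j).isSome := by rw [ht]; rfl
        have := h j hm hne hs
        rwa [show (ρ j).get hs = t by simp [ht]] at this
      · intro h j _ hne hs
        obtain ⟨t, ht⟩ := Option.isSome_iff_exists.1 hs
        have := h j hne t ht
        rwa [show (ρ j).get hs = t by simp [ht]]
    have h2 : (∀ h : (ρ k).isSome, (i k : ℕ) = ((ρ k).get h : ℕ) + 1) ↔
        (∀ t, ρ k = some t → (i k : ℕ) = (t : ℕ) + 1) :=
      optcond (ρ k) (fun t => (i k : ℕ) = (t : ℕ) + 1)
    rw [if_congr h1 (if_congr Iff.rfl rfl (if_congr h2 rfl rfl)) rfl]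
  · rw [contrastRow]; simp only [dif_neg hJ]

section Snoc

variable {n : ℕ} {r : Fin (n + 1) → ℕ}
  (ρ' : ∀ j : Fin n, Option (Fin (r (Fin.castSucc j) - 1)))
  (i : ∀ j : Fin (n + 1), Fin (r j))

lemma dRow_snoc (σ : Option (Fin (r (Fin.last n) - 1))) :
    dRow (n + 1) r (Fin.snoc ρ' σ) i =
      dRow n (fun j => r (Fin.castSucc j)) ρ' (fun j => i (Fin.castSucc j)) *
        bFun (r (Fin.last n)) σ (i (Fin.last n)) := by
  rw [dRow, dRow]
  have hsplit : (∀ j, ∀ t : Fin (r j - 1), (Fin.snoc ρ' σ : ∀ j, Option (Fin (r j - 1))) j = some t →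
      (i j : ℕ) = (t : ℕ)) ↔
      ((∀ j, ∀ t : Fin (r (Fin.castSucc j) - 1), ρ' j = some t → (i (Fin.castSucc j) : ℕ) = (t : ℕ)) ∧
       (∀ t, σ = some t → (i (Fin.last n) : ℕ) = (t : ℕ))) := by
    constructor
    · intro h
      refine ⟨fun j t ht => h (Fin.castSucc j) t (by rwa [Fin.snoc_castSucc]), fun t ht =>
        h (Fin.last n) t (by rwa [Fin.snoc_last])⟩
    · rintro ⟨h1, h2⟩ j
      refine Fin.lastCases (motive := fun j => ∀ t : Fin (r j - 1),
        (Fin.snoc ρ' σ : ∀ j, Option (Fin (r j - 1))) j = some t → (i j : ℕ) = (t : ℕ)) ?_ ?_ j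
      · intro t ht; rw [Fin.snoc_last] at ht; exact h2 t ht
      · intro j t ht; rw [Fin.snoc_castSucc] at ht; exact h1 j t ht
  rw [if_congr hsplit rfl rfl]
  cases σ with
  | none =>
      simp only [bFun, mul_one]
      exact if_congr (by simp) rfl rfl
  | some t =>
      simp only [bFun]
      by_cases hA : ∀ j, ∀ t : Fin (r (Fin.castSucc j) - 1), ρ' j = some t →
          (i (Fin.castSucc j) : ℕ) = (t : ℕ) <;>
        by_cases hB : (i (Fin.last n) : ℕ) = (t : ℕ) <;>
        simp [hA, hB]

lemma contrast_snoc_some (t : Fin (r (Fin.last n) - 1)) :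
    contrastRow (n + 1) r (Fin.snoc ρ' (some t)) i =
      dRow n (fun j => r (Fin.castSucc j)) ρ' (fun j => i (Fin.castSucc j)) *
        aFun (r (Fin.last n)) (some t) (i (Fin.last n)) := by
  classical
  rw [contrastRow_eq]
  have hmem : Fin.last n ∈ Finset.univ.filter
      fun j => ((Fin.snoc ρ' (some t) : ∀ j, Option (Fin (r j - 1))) j).isSome := by
    simp [Fin.snoc_last]
  have hJ : (Finset.univ.filter
      fun j => ((Fin.snoc ρ' (some t) : ∀ j, Option (Fin (r j - 1))) j).isSome).Nonempty :=
    ⟨_, hmem⟩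
  rw [dif_pos hJ]
  have hk : (Finset.univ.filter
      fun j => ((Fin.snoc ρ' (some t) : ∀ j, Option (Fin (r j - 1))) j).isSome).max' hJ
      = Fin.last n :=
    le_antisymm (Finset.max'_le _ _ _ fun x _ => Fin.le_last x) (Finset.le_max' _ _ hmem)
  rw [hk]  -- hope this rewrites all occurrences
  have hcond : (∀ j, j ≠ Fin.last n → ∀ u, (Fin.snoc ρ' (some t) : ∀ j, Option (Fin (r j - 1))) j
      = some u → (i j : ℕ) = (u : ℕ)) ↔
      (∀ j, ∀ u : Fin (r (Fin.castSucc j) - 1), ρ' j = some u → (i (Fin.castSucc j) : ℕ) = (u : ℕ)) := by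
    constructor
    · intro h j u hu
      exact h (Fin.castSucc j) (Fin.ne_last_of_lt (Fin.castSucc_lt_last j)) u
        (by rwa [Fin.snoc_castSucc])
    · intro h j hne u hu
      obtain ⟨j', rfl⟩ := Fin.exists_castSucc_eq.2 hne
      rw [Fin.snoc_castSucc] at hu
      exact h j' u hu
  have h2 : (∀ u, (Fin.snoc ρ' (some t) : ∀ j, Option (Fin (r j - 1))) (Fin.last n) = some u →
      (i (Fin.last n) : ℕ) = (u : ℕ) + 1) ↔ (i (Fin.last n) : ℕ) = (t : ℕ) + 1 := by
    rw [Fin.snoc_last]; simp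
  rw [if_congr hcond rfl rfl, if_congr Iff.rfl rfl (if_congr h2 rfl rfl)]
  rw [dRow, aFun]
  by_cases hA : ∀ j, ∀ u : Fin (r (Fin.castSucc j) - 1), ρ' j = some u →
      (i (Fin.castSucc j) : ℕ) = (u : ℕ) <;>
    by_cases h0 : (i (Fin.last n) : ℕ) = 0 <;>
    by_cases h1 : (i (Fin.last n) : ℕ) = (t : ℕ) + 1 <;>
    simp [hA, h0, h1] <;> first | omega | (rw [if_pos hA]; rw [if_pos hA]) | skip

lemma contrast_snoc_none :
    contrastRow (n + 1) r (Fin.snoc ρ' none) i =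
      contrastRow n (fun j => r (Fin.castSucc j)) ρ' (fun j => i (Fin.castSucc j)) := by
  classical
  rw [contrastRow_eq, contrastRow_eq]
  have him : (Finset.univ.filter
      fun j => ((Fin.snoc ρ' none : ∀ j, Option (Fin (r j - 1))) j).isSome)
      = (Finset.univ.filter fun j => (ρ' j).isSome).image Fin.castSucc := by
    ext j
    refine Fin.lastCases ?_ ?_ j
    · simp only [Finset.mem_filter, Finset.mem_univ, true_and, Fin.snoc_last,
        Finset.mem_image]
      constructor
      · intro h; exact absurd h (by simp)
      · rintro ⟨a, _, ha⟩
        exact absurd ha (Fin.ne_last_of_lt (Fin.castSucc_lt_last a))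
    · intro j
      simp only [Finset.mem_filter, Finset.mem_univ, true_and, Fin.snoc_castSucc,
        Finset.mem_image]
      constructor
      · intro h; exact ⟨j, by simp [h], rfl⟩
      · rintro ⟨a, ha, haeq⟩
        have : a = j := Fin.castSucc_injective n haeq
        subst this; simpa using ha
  by_cases hJ0 : (Finset.univ.filter fun j => (ρ' j).isSome).Nonempty
  · have hJ1 : (Finset.univ.filter
        fun j => ((Fin.snoc ρ' none : ∀ j, Option (Fin (r j - 1))) j).isSome).Nonempty := by
      rw [him]; exact hJ0.image _
    rw [dif_pos hJ1, dif_pos hJ0]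
    have hmax : (Finset.univ.filter
        fun j => ((Fin.snoc ρ' none : ∀ j, Option (Fin (r j - 1))) j).isSome).max' hJ1
        = Fin.castSucc ((Finset.univ.filter fun j => (ρ' j).isSome).max' hJ0) := by
      refine le_antisymm (Finset.max'_le _ _ _ fun x hx => ?_) (Finset.le_max' _ _ ?_)
      · rw [him] at hx
        obtain ⟨a, ha, rfl⟩ := Finset.mem_image.1 hx
        exact Fin.castSucc_le_castSucc_iff.2 (Finset.le_max' _ _ ha)
      · rw [him]
        exact Finset.mem_image_of_mem _ (Finset.max'_mem _ hJ0)
    rw [hmax]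
    set k := (Finset.univ.filter fun j => (ρ' j).isSome).max' hJ0 with hkdef
    have hcond : (∀ j, j ≠ Fin.castSucc k → ∀ u, (Fin.snoc ρ' none : ∀ j, Option (Fin (r j - 1))) j
        = some u → (i j : ℕ) = (u : ℕ)) ↔
        (∀ j, j ≠ k → ∀ u : Fin (r (Fin.castSucc j) - 1), ρ' j = some u →
          (i (Fin.castSucc j) : ℕ) = (u : ℕ)) := by
      constructor
      · intro h j hne u hu
        exact h (Fin.castSucc j) (by simpa [Fin.castSucc_inj] using hne) u
          (by rwa [Fin.snoc_castSucc])
      · intro h j hne u hu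
        refine Fin.lastCases (motive := fun j => j ≠ Fin.castSucc k →
            ∀ u : Fin (r j - 1), (Fin.snoc ρ' none : ∀ j, Option (Fin (r j - 1))) j = some u →
            (i j : ℕ) = (u : ℕ)) ?_ ?_ j hne u hu
        · intro _ u hu
          rw [Fin.snoc_last] at hu; exact absurd hu (by simp)
        · intro j hne u hu
          rw [Fin.snoc_castSucc] at hu
          exact h j (by simpa [Fin.castSucc_inj] using hne) u hu
    have h2 : (∀ u, (Fin.snoc ρ' none : ∀ j, Option (Fin (r j - 1))) (Fin.castSucc k) = some u →
        (i (Fin.castSucc k) : ℕ) = (u : ℕ) + 1) ↔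
        (∀ u : Fin (r (Fin.castSucc k) - 1), ρ' k = some u → (i (Fin.castSucc k) : ℕ) = (u : ℕ) + 1) := by
      constructor
      · intro h u hu; exact h u (by rwa [Fin.snoc_castSucc])
      · intro h u hu; rw [Fin.snoc_castSucc] at hu; exact h u hu
    rw [if_congr hcond rfl rfl, if_congr Iff.rfl rfl (if_congr h2 rfl rfl)]
  · have hJ1 : ¬ (Finset.univ.filter
        fun j => ((Fin.snoc ρ' none : ∀ j, Option (Fin (r j - 1))) j).isSome).Nonempty := by
      rw [him, Finset.image_nonempty]; exact hJ0
    rw [dif_neg hJ1, dif_neg hJ0]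

end Snoc

open Submodule in
lemma span_map_mem {M N : Type*} [AddCommMonoid M] [Module ℚ M] [AddCommMonoid N] [Module ℚ N]
    (T : M →ₗ[ℚ] N) (s : Set M) (S : Set N) (h : ∀ x ∈ s, T x ∈ span ℚ S) {x : M}
    (hx : x ∈ span ℚ s) : T x ∈ span ℚ S :=
  (Submodule.span_le.2 h : span ℚ s ≤ (span ℚ S).comap T) hx

lemma sum_ind (m c v : ℕ) :
    (∑ t : Fin m, if v = (t : ℕ) + c then (1 : ℚ) else 0) =
      if c ≤ v ∧ v < m + c then 1 else 0 := by
  by_cases h : c ≤ v ∧ v < m + c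
  · rw [if_pos h, Finset.sum_eq_single (⟨v - c, by omega⟩ : Fin m)]
    · rw [if_pos (by simp; omega)]
    · intro t _ ht
      rw [if_neg]
      intro hv
      exact ht (by apply Fin.ext; simp; omega)
    · simp
  · rw [if_neg h, Finset.sum_eq_zero]
    intro t _
    rw [if_neg]
    have := t.isLt
    omega

open Submodule in
lemma span_b (m : ℕ) (hm : 1 ≤ m) (g : Fin m → ℚ) :
    g ∈ span ℚ (Set.range (bFun m)) := by
  classical
  have hδ : ∀ x : Fin m, (fun j : Fin m => if x = j then (1:ℚ) else 0) ∈
      span ℚ (Set.range (bFun m)) := by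
    intro x
    by_cases hx : (x : ℕ) < m - 1
    · have : (fun j : Fin m => if x = j then (1:ℚ) else 0) = bFun m (some ⟨(x : ℕ), hx⟩) := by
        funext j
        simp only [bFun]
        congr 1
        simp [Fin.ext_iff, eq_comm]
      rw [this]; exact subset_span ⟨some _, rfl⟩
    · have hx' : (x : ℕ) = m - 1 := by have := x.isLt; omega
      have : (fun j : Fin m => if x = j then (1:ℚ) else 0)
          = bFun m none - ∑ t : Fin (m - 1), bFun m (some t) := by
        funext j
        simp only [bFun, Pi.sub_apply, Finset.sum_apply]
        rw [show (∑ t : Fin (m-1), if (j:ℕ) = (t:ℕ) then (1:ℚ) else 0)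
            = ∑ t : Fin (m-1), if (j:ℕ) = (t:ℕ) + 0 then (1:ℚ) else 0 by simp, sum_ind]
        have hj := j.isLt
        by_cases h : x = j
        · subst h
          rw [if_pos rfl, if_neg (by omega)]
          norm_num
        · rw [if_neg h, if_pos ⟨Nat.zero_le _, by
            have : (j : ℕ) ≠ (x : ℕ) := fun hc => h (Fin.ext hc.symm)
            omega⟩]
          norm_num
      rw [this]
      exact sub_mem (subset_span ⟨none, rfl⟩)
        (sum_mem fun t _ => subset_span ⟨some t, rfl⟩)
  rw [pi_eq_sum_univ g]
  exact sum_mem fun x _ => smul_mem _ _ (hδ x)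

open Submodule in
lemma span_a (m : ℕ) (hm : 1 ≤ m) (g : Fin m → ℚ) :
    g ∈ span ℚ (Set.range (aFun m)) := by
  classical
  have h0 : (fun j : Fin m => if (j : ℕ) = 0 then (1:ℚ) else 0) ∈
      span ℚ (Set.range (aFun m)) := by
    have : (fun j : Fin m => if (j : ℕ) = 0 then (1:ℚ) else 0)
        = (m : ℚ)⁻¹ • (aFun m none + ∑ t : Fin (m - 1), aFun m (some t)) := by
      funext j
      simp only [aFun, Pi.smul_apply, Pi.add_apply, Finset.sum_apply, smul_eq_mul]
      rw [Finset.sum_sub_distrib, Finset.sum_const, sum_ind]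
      have hj := j.isLt
      have hm0 : (m : ℚ) ≠ 0 := by positivity
      by_cases h : (j : ℕ) = 0
      · rw [if_pos h,
          if_neg (show ¬(1 ≤ (j:ℕ) ∧ (j:ℕ) < m - 1 + 1) by omega)]
        simp only [Finset.card_univ, Fintype.card_fin, nsmul_eq_mul, mul_one, sub_zero]
        push_cast [Nat.cast_sub hm]
        field_simp
        ring
      · rw [if_neg h,
          if_pos (show 1 ≤ (j:ℕ) ∧ (j:ℕ) < m - 1 + 1 by omega)]
        simp
    rw [this]
    exact smul_mem _ _ (add_mem (subset_span ⟨none, rfl⟩)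
      (sum_mem fun t _ => subset_span ⟨some t, rfl⟩))
  have hδ : ∀ x : Fin m, (fun j : Fin m => if x = j then (1:ℚ) else 0) ∈
      span ℚ (Set.range (aFun m)) := by
    intro x
    by_cases hx : (x : ℕ) = 0
    · have : (fun j : Fin m => if x = j then (1:ℚ) else 0)
          = fun j : Fin m => if (j : ℕ) = 0 then (1:ℚ) else 0 := by
        funext j
        congr 1
        simp only [eq_iff_iff, Fin.ext_iff, hx, eq_comm]
      rw [this]; exact h0
    · have hx1 : (x : ℕ) - 1 < m - 1 := by have := x.isLt; omega
      have : (fun j : Fin m => if x = j then (1:ℚ) else 0)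
          = (fun j : Fin m => if (j : ℕ) = 0 then (1:ℚ) else 0)
            - aFun m (some ⟨(x : ℕ) - 1, hx1⟩) := by
        funext j
        simp only [aFun, Pi.sub_apply]
        by_cases h : x = j
        · subst h
          rw [if_pos rfl, if_neg hx, if_pos (show (x:ℕ) = ((⟨(x:ℕ)-1,hx1⟩ : Fin (m-1)):ℕ) + 1 by simp only []; omega)]
          norm_num
        · rw [if_neg h]
          by_cases hj0 : (j : ℕ) = 0
          · rw [if_pos hj0,
              if_neg (show ¬(j:ℕ) = ((⟨(x:ℕ)-1,hx1⟩ : Fin (m-1)):ℕ) + 1 by simp only []; omega)]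
            norm_num
          · rw [if_neg hj0,
              if_neg (show ¬(j:ℕ) = ((⟨(x:ℕ)-1,hx1⟩ : Fin (m-1)):ℕ) + 1 by
                simp only []
                intro hc
                exact h (Fin.ext (by omega)))]
            norm_num
      rw [this]
      exact sub_mem h0 (subset_span ⟨some _, rfl⟩)
  rw [pi_eq_sum_univ g]
  exact sum_mem fun x _ => smul_mem _ _ (hδ x)

/-- Tensoring on the left: `f ↦ f ⊗ g` as a linear map in `f`. -/
noncomputable def tensorL (n : ℕ) (r : Fin (n + 1) → ℕ) (g : Fin (r (Fin.last n)) → ℚ) :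
    ((∀ j : Fin n, Fin (r (Fin.castSucc j))) → ℚ) →ₗ[ℚ] ((∀ j : Fin (n + 1), Fin (r j)) → ℚ) where
  toFun f := fun i => f (fun j => i (Fin.castSucc j)) * g (i (Fin.last n))
  map_add' f₁ f₂ := by funext i; simp [add_mul]
  map_smul' c f := by funext i; simp [smul_eq_mul, mul_assoc]

/-- Tensoring on the right: `g ↦ f ⊗ g` as a linear map in `g`. -/
noncomputable def tensorR (n : ℕ) (r : Fin (n + 1) → ℕ)
    (f : (∀ j : Fin n, Fin (r (Fin.castSucc j))) → ℚ) :
    (Fin (r (Fin.last n)) → ℚ) →ₗ[ℚ] ((∀ j : Fin (n + 1), Fin (r j)) → ℚ) where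
  toFun g := fun i => f (fun j => i (Fin.castSucc j)) * g (i (Fin.last n))
  map_add' g₁ g₂ := by funext i; simp [mul_add]
  map_smul' c g := by funext i; simp [smul_eq_mul]; ring

open Submodule in
lemma dRow_span : ∀ (n : ℕ) (r : Fin n → ℕ), (∀ j, 1 ≤ r j) →
    ∀ f : (∀ j, Fin (r j)) → ℚ, f ∈ span ℚ (Set.range (dRow n r)) := by
  intro n
  induction n with
  | zero =>
      intro r hr f
      have hone : dRow 0 r (fun j => j.elim0) = fun _ => 1 := by
        funext i; rw [dRow, if_pos (fun j => j.elim0)]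
      have : f = f (fun j => j.elim0) • dRow 0 r (fun j => j.elim0) := by
        funext i
        rw [show i = (fun j => j.elim0) from funext fun j => j.elim0, hone]
        simp
      rw [this]
      exact smul_mem _ _ (subset_span ⟨_, rfl⟩)
  | succ n ih =>
      intro r hr f
      have step1 : ∀ (σ : Option (Fin (r (Fin.last n) - 1)))
          (f' : (∀ j : Fin n, Fin (r (Fin.castSucc j))) → ℚ),
          (fun i => f' (fun j => i (Fin.castSucc j)) * bFun (r (Fin.last n)) σ (i (Fin.last n)))
            ∈ span ℚ (Set.range (dRow (n + 1) r)) := by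
        intro σ f'
        have := span_map_mem (tensorL n r (bFun (r (Fin.last n)) σ)) _
          (Set.range (dRow (n + 1) r)) ?_
          (ih (fun j => r (Fin.castSucc j)) (fun j => hr _) f')
        · exact this
        · rintro x ⟨ρ', rfl⟩
          have : tensorL n r (bFun (r (Fin.last n)) σ)
              (dRow n (fun j => r (Fin.castSucc j)) ρ') = dRow (n + 1) r (Fin.snoc ρ' σ) :=
            funext fun i => (dRow_snoc ρ' i σ).symm
          rw [this]
          exact subset_span ⟨_, rfl⟩
      have step2 : ∀ (f' : (∀ j : Fin n, Fin (r (Fin.castSucc j))) → ℚ)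
          (g : Fin (r (Fin.last n)) → ℚ),
          (fun i => f' (fun j => i (Fin.castSucc j)) * g (i (Fin.last n)))
            ∈ span ℚ (Set.range (dRow (n + 1) r)) := by
        intro f' g
        have := span_map_mem (tensorR n r f') _ (Set.range (dRow (n + 1) r)) ?_
          (span_b (r (Fin.last n)) (hr _) g)
        · exact this
        · rintro x ⟨σ, rfl⟩
          exact step1 σ f'
      rw [pi_eq_sum_univ f]
      refine sum_mem fun x _ => smul_mem _ _ ?_
      have : (fun i => if x = i then (1:ℚ) else 0)
          = fun i : ∀ j : Fin (n+1), Fin (r j) =>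
              (if (fun j => x (Fin.castSucc j)) = (fun j => i (Fin.castSucc j)) then (1:ℚ) else 0)
                * (if x (Fin.last n) = i (Fin.last n) then (1:ℚ) else 0) := by
        funext i
        by_cases h : x = i
        · subst h; simp
        · rw [if_neg h]
          by_cases h1 : (fun j => x (Fin.castSucc j)) = (fun j => i (Fin.castSucc j))
          · by_cases h2 : x (Fin.last n) = i (Fin.last n)
            · exfalso
              apply h
              funext j
              refine Fin.lastCases h2 (fun j' => ?_) j
              exact congrFun h1 j'
            · rw [if_neg h2]; ring
          · rw [if_neg h1]; ring
      rw [this]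
      exact step2 (fun y => if (fun j => x (Fin.castSucc j)) = y then (1:ℚ) else 0)
        (fun y => if x (Fin.last n) = y then (1:ℚ) else 0)

open Submodule in
lemma contrastRow_span : ∀ (n : ℕ) (r : Fin n → ℕ), (∀ j, 1 ≤ r j) →
    ∀ f : (∀ j, Fin (r j)) → ℚ, f ∈ span ℚ (Set.range (contrastRow n r)) := by
  intro n
  induction n with
  | zero =>
      intro r hr f
      have hone : contrastRow 0 r (fun j => j.elim0) = fun _ => 1 := by
        funext i
        rw [contrastRow_eq, dif_neg]
        simp [Finset.filter_eq_empty_iff]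
      have : f = f (fun j => j.elim0) • contrastRow 0 r (fun j => j.elim0) := by
        funext i
        rw [show i = (fun j => j.elim0) from funext fun j => j.elim0, hone]
        simp
      rw [this]
      exact smul_mem _ _ (subset_span ⟨_, rfl⟩)
  | succ n ih =>
      intro r hr f
      have step1 : ∀ (σ : Option (Fin (r (Fin.last n) - 1)))
          (f' : (∀ j : Fin n, Fin (r (Fin.castSucc j))) → ℚ),
          (fun i => f' (fun j => i (Fin.castSucc j)) * aFun (r (Fin.last n)) σ (i (Fin.last n)))
            ∈ span ℚ (Set.range (contrastRow (n + 1) r)) := by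
        intro σ f'
        cases σ with
        | none =>
            have := span_map_mem (tensorL n r (aFun (r (Fin.last n)) none)) _
              (Set.range (contrastRow (n + 1) r)) ?_
              (ih (fun j => r (Fin.castSucc j)) (fun j => hr _) f')
            · exact this
            · rintro x ⟨ρ', rfl⟩
              have : tensorL n r (aFun (r (Fin.last n)) none)
                  (contrastRow n (fun j => r (Fin.castSucc j)) ρ')
                  = contrastRow (n + 1) r (Fin.snoc ρ' none) := by
                funext i
                show contrastRow n (fun j => r (Fin.castSucc j)) ρ' (fun j => i (Fin.castSucc j))
                    * aFun (r (Fin.last n)) none (i (Fin.last n)) = _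
                rw [contrast_snoc_none ρ' i, aFun, mul_one]
              rw [this]
              exact subset_span ⟨_, rfl⟩
        | some t =>
            have := span_map_mem (tensorL n r (aFun (r (Fin.last n)) (some t))) _
              (Set.range (contrastRow (n + 1) r)) ?_
              (dRow_span n (fun j => r (Fin.castSucc j)) (fun j => hr _) f')
            · exact this
            · rintro x ⟨ρ', rfl⟩
              have : tensorL n r (aFun (r (Fin.last n)) (some t))
                  (dRow n (fun j => r (Fin.castSucc j)) ρ')
                  = contrastRow (n + 1) r (Fin.snoc ρ' (some t)) :=
                funext fun i => (contrast_snoc_some ρ' i t).symm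
              rw [this]
              exact subset_span ⟨_, rfl⟩
      have step2 : ∀ (f' : (∀ j : Fin n, Fin (r (Fin.castSucc j))) → ℚ)
          (g : Fin (r (Fin.last n)) → ℚ),
          (fun i => f' (fun j => i (Fin.castSucc j)) * g (i (Fin.last n)))
            ∈ span ℚ (Set.range (contrastRow (n + 1) r)) := by
        intro f' g
        have := span_map_mem (tensorR n r f') _ (Set.range (contrastRow (n + 1) r)) ?_
          (span_a (r (Fin.last n)) (hr _) g)
        · exact this
        · rintro x ⟨σ, rfl⟩
          exact step1 σ f'
      rw [pi_eq_sum_univ f]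
      refine sum_mem fun x _ => smul_mem _ _ ?_
      have : (fun i => if x = i then (1:ℚ) else 0)
          = fun i : ∀ j : Fin (n+1), Fin (r j) =>
              (if (fun j => x (Fin.castSucc j)) = (fun j => i (Fin.castSucc j)) then (1:ℚ) else 0)
                * (if x (Fin.last n) = i (Fin.last n) then (1:ℚ) else 0) := by
        funext i
        by_cases h : x = i
        · subst h; simp
        · rw [if_neg h]
          by_cases h1 : (fun j => x (Fin.castSucc j)) = (fun j => i (Fin.castSucc j))
          · by_cases h2 : x (Fin.last n) = i (Fin.last n)
            · exfalso
              apply h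
              funext j
              refine Fin.lastCases h2 (fun j' => ?_) j
              exact congrFun h1 j'
            · rw [if_neg h2]; ring
          · rw [if_neg h1]; ring
      rw [this]
      exact step2 (fun y => if (fun j => x (Fin.castSucc j)) = y then (1:ℚ) else 0)
        (fun y => if x (Fin.last n) = y then (1:ℚ) else 0)

/-- The contrast matrix `C` is a nonsingular `m × m` matrix. -/
theorem contrastMatrix_nonsingular (n : ℕ) (r : Fin n → ℕ) (hr : ∀ j, 2 ≤ r j) :
    Function.Bijective
      (Matrix.mulVecLin
        (Matrix.of fun (ρ : ∀ j, Option (Fin (r j - 1))) (i : ∀ j, Fin (r j)) =>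
          contrastRow n r ρ i)) := by
  classical
  set M := Matrix.of fun (ρ : ∀ j, Option (Fin (r j - 1))) (i : ∀ j, Fin (r j)) =>
    contrastRow n r ρ i with hM
  have hr1 : ∀ j, 1 ≤ r j := fun j => le_trans one_le_two (hr j)
  have hinj : Function.Injective M.mulVecLin := by
    rw [injective_iff_map_eq_zero]
    intro x hx
    let φ : ((∀ j, Fin (r j)) → ℚ) →ₗ[ℚ] ℚ :=
      { toFun := fun f => dotProduct f x
        map_add' := fun f₁ f₂ => add_dotProduct f₁ f₂ x
        map_smul' := fun c f => smul_dotProduct c f x }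
    have hker : Set.range (contrastRow n r) ⊆ (LinearMap.ker φ : Set _) := by
      rintro _ ⟨ρ, rfl⟩
      have : M.mulVecLin x ρ = 0 := by rw [hx]; rfl
      simpa [φ, Matrix.mulVecLin, Matrix.mulVec, M] using this
    have hle : Submodule.span ℚ (Set.range (contrastRow n r)) ≤ LinearMap.ker φ :=
      Submodule.span_le.2 hker
    have hx0 : φ x = 0 := hle (contrastRow_span n r hr1 x)
    exact dotProduct_self_eq_zero.mp hx0
  have hcard : Fintype.card (∀ j, Fin (r j)) = Fintype.card (∀ j, Option (Fin (r j - 1))) := by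
    simp only [Fintype.card_pi, Fintype.card_fin, Fintype.card_option]
    exact Finset.prod_congr rfl fun j _ => by have := hr1 j; omega
  have hfr : Module.finrank ℚ ((∀ j, Fin (r j)) → ℚ)
      = Module.finrank ℚ ((∀ j, Option (Fin (r j - 1))) → ℚ) := by
    rw [Module.finrank_fintype_fun_eq_card, Module.finrank_fintype_fun_eq_card, hcard]
  exact ⟨hinj, (LinearMap.injective_iff_surjective_of_finrank_eq_finrank hfr).mp hinj⟩
end

section
/- Let I = [r_1] × ··· × [r_n], y : I → {0,1}, and F = {i ∈ I : y(i) = 1}. Fix t ≤ n and suppose s is a common multiple of {∏_{j∈J} r_j : J ⊆ [n], |J| = t}. Then F has size s and is orthogonal of strength t (i.e., for every J with |J| = t and every level combination i_J ∈ ∏_{j∈J}[r_j], the number of points of F with that restriction is s/∏_{j∈J}r_j) if and only if Σ_i y(i) = s and C_k y = 0 for k = 1,...,t, where C_k is the block of contrast rows c_{J(ĩ)} with |J| = k. -/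
section Aux
variable {n : ℕ} {r : Fin n → ℕ}

open Classical in
noncomputable def marg (r : Fin n → ℕ) (y : (∀ j, Fin (r j)) → ℚ) (J : Finset (Fin n))
    (ℓ : ∀ j, Fin (r j)) : ℚ :=
  ∑ i ∈ Finset.univ.filter (fun i : ∀ j, Fin (r j) => ∀ j ∈ J, i j = ℓ j), y i

lemma marg_empty (y : (∀ j, Fin (r j)) → ℚ) (ℓ : ∀ j, Fin (r j)) :
    marg r y ∅ ℓ = ∑ i, y i := by
  simp [marg]

lemma marg_erase {y : (∀ j, Fin (r j)) → ℚ} {J : Finset (Fin n)} {j : Fin n}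
    (hj : j ∈ J) (ℓ : ∀ j, Fin (r j)) :
    marg r y (J.erase j) ℓ = ∑ a : Fin (r j), marg r y J (Function.update ℓ j a) := by
  classical
  unfold marg
  rw [← Finset.sum_fiberwise_of_maps_to (g := fun i : ∀ j, Fin (r j) => i j) (t := Finset.univ)
    (fun i _ => Finset.mem_univ _) y]
  apply Finset.sum_congr rfl
  intro a _
  rw [Finset.filter_filter]
  apply Finset.sum_congr _ (fun _ _ => rfl)
  apply Finset.filter_congr
  intro i _
  constructor
  · rintro ⟨h1, h2⟩ j' hj'
    rcases eq_or_ne j' j with rfl | hne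
    · rw [Function.update_self]; exact h2
    · rw [Function.update_of_ne hne]; exact h1 j' (Finset.mem_erase.2 ⟨hne, hj'⟩)
  · intro h
    constructor
    · intro j' hj'
      have := h j' (Finset.mem_of_mem_erase hj')
      rwa [Function.update_of_ne (Finset.ne_of_mem_erase hj')] at this
    · have := h j hj
      rwa [Function.update_self] at this

open Classical in
lemma marg_card {y : (∀ j, Fin (r j)) → ℚ} (hy : ∀ i, y i = 0 ∨ y i = 1)
    (J : Finset (Fin n)) (ℓ : ∀ j, Fin (r j)) :
    marg r y J ℓ =
      ((Finset.univ.filter fun i : ∀ j, Fin (r j) =>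
        (∀ j ∈ J, i j = ℓ j) ∧ y i = 1).card : ℚ) := by
  unfold marg
  rw [Finset.sum_filter, Finset.card_filter]
  push_cast
  apply Finset.sum_congr rfl
  intro i _
  rcases hy i with h | h <;> by_cases hP : ∀ j ∈ J, i j = ℓ j <;> simp [h, hP]

lemma contrast_eq_sub (y : (∀ j, Fin (r j)) → ℚ) (ρ : ∀ j, Option (Fin (r j - 1)))
    (J : Finset (Fin n)) (hJeq : Finset.univ.filter (fun j => (ρ j).isSome) = J)
    (hJ : J.Nonempty) (ℓ0 ℓ1 : ∀ j, Fin (r j))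
    (h0 : ∀ j ∈ J, j ≠ J.max' hJ → ∀ h : (ρ j).isSome, (ℓ0 j : ℕ) = ((ρ j).get h : ℕ))
    (h1 : ∀ j ∈ J, j ≠ J.max' hJ → ∀ h : (ρ j).isSome, (ℓ1 j : ℕ) = ((ρ j).get h : ℕ))
    (h0k : (ℓ0 (J.max' hJ) : ℕ) = 0)
    (h1k : ∀ h : (ρ (J.max' hJ)).isSome,
      (ℓ1 (J.max' hJ) : ℕ) = ((ρ (J.max' hJ)).get h : ℕ) + 1) :
    ∑ i, contrastRow n r ρ i * y i = marg r y J ℓ0 - marg r y J ℓ1 := by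
  classical
  subst hJeq
  set J : Finset (Fin n) := Finset.univ.filter (fun j => (ρ j).isSome) with hJdef
  set k : Fin n := J.max' hJ with hkdef
  have hkJ : k ∈ J := J.max'_mem hJ
  have memS : ∀ j ∈ J, (ρ j).isSome := fun j hj => (Finset.mem_filter.1 hj).2
  have hkS : (ρ k).isSome := memS k hkJ
  have key : ∀ i : ∀ j, Fin (r j), contrastRow n r ρ i =
      (if ∀ j ∈ J, i j = ℓ0 j then (1 : ℚ) else 0) -
      (if ∀ j ∈ J, i j = ℓ1 j then (1 : ℚ) else 0) := by
    intro i
    unfold contrastRow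
    rw [dif_pos hJ]
    by_cases hC : ∀ j ∈ J, j ≠ k → ∀ h : (ρ j).isSome, (i j : ℕ) = ((ρ j).get h : ℕ)
    · rw [if_pos hC]
      by_cases hi0 : (i k : ℕ) = 0
      · rw [if_pos hi0]
        have hP0 : ∀ j ∈ J, i j = ℓ0 j := by
          intro j hj
          rcases eq_or_ne j k with rfl | hne
          · exact Fin.ext (hi0.trans h0k.symm)
          · exact Fin.ext ((hC j hj hne (memS j hj)).trans (h0 j hj hne (memS j hj)).symm)
        have hP1 : ¬ ∀ j ∈ J, i j = ℓ1 j := by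
          intro h
          have := congrArg Fin.val (h k hkJ)
          rw [hi0, h1k hkS] at this
          omega
        rw [if_pos hP0, if_neg hP1]; norm_num
      · rw [if_neg hi0]
        by_cases hi1 : ∀ h : (ρ k).isSome, (i k : ℕ) = ((ρ k).get h : ℕ) + 1
        · rw [if_pos hi1]
          have hP1 : ∀ j ∈ J, i j = ℓ1 j := by
            intro j hj
            rcases eq_or_ne j k with rfl | hne
            · exact Fin.ext ((hi1 hkS).trans (h1k hkS).symm)
            · exact Fin.ext ((hC j hj hne (memS j hj)).trans (h1 j hj hne (memS j hj)).symm)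
          have hP0 : ¬ ∀ j ∈ J, i j = ℓ0 j := by
            intro h
            have := congrArg Fin.val (h k hkJ)
            rw [h0k] at this
            exact hi0 this
          rw [if_neg hP0, if_pos hP1]; norm_num
        · rw [if_neg hi1]
          push_neg at hi1
          obtain ⟨h, hne⟩ := hi1
          have hP0 : ¬ ∀ j ∈ J, i j = ℓ0 j := by
            intro hh
            have := congrArg Fin.val (hh k hkJ)
            rw [h0k] at this
            exact hi0 this
          have hP1 : ¬ ∀ j ∈ J, i j = ℓ1 j := by
            intro hh
            have := congrArg Fin.val (hh k hkJ)
            rw [h1k hkS] at this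
            exact hne this
          rw [if_neg hP0, if_neg hP1]; norm_num
    · rw [if_neg hC]
      push_neg at hC
      obtain ⟨j, hj, hne, h, hij⟩ := hC
      have hP0 : ¬ ∀ j ∈ J, i j = ℓ0 j := by
        intro hh
        exact hij ((congrArg Fin.val (hh j hj)).trans (h0 j hj hne h))
      have hP1 : ¬ ∀ j ∈ J, i j = ℓ1 j := by
        intro hh
        exact hij ((congrArg Fin.val (hh j hj)).trans (h1 j hj hne h))
      rw [if_neg hP0, if_neg hP1]; norm_num
  calc ∑ i, contrastRow n r ρ i * y i
      = ∑ i : ∀ j, Fin (r j),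
          ((if ∀ j ∈ J, i j = ℓ0 j then y i else 0) -
           (if ∀ j ∈ J, i j = ℓ1 j then y i else 0)) := by
        apply Finset.sum_congr rfl
        intro i _
        rw [key i, sub_mul, ite_mul, ite_mul, one_mul, zero_mul]
    _ = marg r y J ℓ0 - marg r y J ℓ1 := by
        rw [Finset.sum_sub_distrib]
        unfold marg
        rw [Finset.sum_filter, Finset.sum_filter]

def mkRho (r : Fin n → ℕ) (J : Finset (Fin n)) (v : Fin n → ℕ)
    (hv : ∀ j ∈ J, v j < r j - 1) : ∀ j, Option (Fin (r j - 1)) :=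
  fun j => if h : j ∈ J then some ⟨v j, hv j h⟩ else none

lemma mkRho_filter (J : Finset (Fin n)) (v : Fin n → ℕ) (hv : ∀ j ∈ J, v j < r j - 1) :
    Finset.univ.filter (fun j => (mkRho r J v hv j).isSome) = J := by
  ext j
  by_cases h : j ∈ J <;> simp [mkRho, h]

lemma mkRho_get (J : Finset (Fin n)) (v : Fin n → ℕ) (hv : ∀ j ∈ J, v j < r j - 1)
    {j : Fin n} (h : j ∈ J) (hs : (mkRho r J v hv j).isSome) :
    (((mkRho r J v hv j).get hs : Fin (r j - 1)) : ℕ) = v j := by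
  simp [mkRho, h]

lemma marg_const_subset (hr : ∀ j, 2 ≤ r j) {y : (∀ j, Fin (r j)) → ℚ} {c : ℚ}
    {J' J : Finset (Fin n)} (hsub : J' ⊆ J)
    (h : ∀ ℓ, marg r y J ℓ * ∏ j ∈ J, (r j : ℚ) = c) :
    ∀ ℓ, marg r y J' ℓ * ∏ j ∈ J', (r j : ℚ) = c := by
  classical
  suffices H : ∀ d (J : Finset (Fin n)), J' ⊆ J → (J \ J').card = d →
      (∀ ℓ, marg r y J ℓ * ∏ j ∈ J, (r j : ℚ) = c) →
      ∀ ℓ, marg r y J' ℓ * ∏ j ∈ J', (r j : ℚ) = c by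
    exact H _ J hsub rfl h
  intro d
  induction d with
  | zero =>
    intro J hsub hcard h
    have : J \ J' = ∅ := Finset.card_eq_zero.1 hcard
    have hJJ : J = J' := Finset.Subset.antisymm
      (fun x hx => by
        by_contra hx'
        exact (Finset.eq_empty_iff_forall_notMem.1 this x) (Finset.mem_sdiff.2 ⟨hx, hx'⟩))
      hsub
    exact hJJ ▸ h
  | succ d ih =>
    intro J hsub hcard h
    have hne : (J \ J').Nonempty := Finset.card_pos.1 (by omega)
    obtain ⟨j, hj⟩ := hne
    have hjJ : j ∈ J := (Finset.mem_sdiff.1 hj).1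
    have hjJ' : j ∉ J' := (Finset.mem_sdiff.1 hj).2
    have hrj : (r j : ℚ) ≠ 0 := by
      have := hr j; positivity
    have step : ∀ ℓ, marg r y (J.erase j) ℓ * ∏ j' ∈ J.erase j, (r j' : ℚ) = c := by
      intro ℓ
      have hrec := marg_erase (y := y) hjJ ℓ
      have hprod : ∏ j' ∈ J, (r j' : ℚ) = (r j : ℚ) * ∏ j' ∈ J.erase j, (r j' : ℚ) :=
        (Finset.mul_prod_erase J _ hjJ).symm
      have hsum : ∑ a : Fin (r j), (marg r y J (Function.update ℓ j a) *
          ∏ j' ∈ J, (r j' : ℚ)) = (r j : ℚ) * c := by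
        rw [Finset.sum_congr rfl (fun a _ => h (Function.update ℓ j a))]
        simp [Finset.card_univ, mul_comm]
      rw [← Finset.sum_mul, ← hrec, hprod] at hsum
      apply mul_left_cancel₀ hrj
      rw [← hsum]; ring
    have hsub' : J' ⊆ J.erase j := fun x hx =>
      Finset.mem_erase.2 ⟨fun hxj => hjJ' (hxj ▸ hx), hsub hx⟩
    have hcard' : (J.erase j \ J').card = d := by
      have : J.erase j \ J' = (J \ J').erase j := by
        ext x
        simp only [Finset.mem_sdiff, Finset.mem_erase]
        tauto
      rw [this, Finset.card_erase_of_mem hj, hcard]; omega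
    exact ih (J.erase j) hsub' hcard' step

lemma marg_const_of_contrasts (hr : ∀ j, 2 ≤ r j) (y : (∀ j, Fin (r j)) → ℚ) (t : ℕ)
    (H : ∀ ρ : ∀ j, Option (Fin (r j - 1)),
        1 ≤ (Finset.univ.filter fun j => (ρ j).isSome).card →
        (Finset.univ.filter fun j => (ρ j).isSome).card ≤ t →
        ∑ i, contrastRow n r ρ i * y i = 0) :
    ∀ J : Finset (Fin n), J.card ≤ t →
      ∀ ℓ, marg r y J ℓ * ∏ j ∈ J, (r j : ℚ) = ∑ i, y i := by
  classical
  intro J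
  induction J using Finset.strongInduction with
  | _ J ih =>
  intro hJt
  rcases J.eq_empty_or_nonempty with rfl | hJne
  · intro ℓ; simp [marg_empty]
  set k : Fin n := J.max' hJne with hk
  have hkJ : k ∈ J := J.max'_mem hJne
  set J₀ : Finset (Fin n) := J.erase k with hJ₀
  have hJ₀sub : J₀ ⊂ J := Finset.erase_ssubset hkJ
  have hJ₀t : J₀.card ≤ t := le_trans (Finset.card_le_card hJ₀sub.subset) hJt
  have IH0 : ∀ ℓ, marg r y J₀ ℓ * ∏ j ∈ J₀, (r j : ℚ) = ∑ i, y i := ih J₀ hJ₀sub hJ₀t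
  have hrk0 : 0 < r k := by have := hr k; omega
  have key : ∀ ℓ, marg r y J ℓ * (r k : ℚ) = marg r y J₀ ℓ := by
    suffices Hd : ∀ d, ∀ ℓ : ∀ j, Fin (r j),
        (J₀.filter fun j => (ℓ j : ℕ) = r j - 1).card = d →
        marg r y J ℓ * (r k : ℚ) = marg r y J₀ ℓ by
      intro ℓ; exact Hd _ ℓ rfl
    intro d
    induction d with
    | zero =>
      intro ℓ hd
      have htop : ∀ j ∈ J₀, (ℓ j : ℕ) < r j - 1 := by
        intro j hj
        have h1 : (ℓ j : ℕ) < r j := (ℓ j).isLt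
        have h2 : ¬ ((ℓ j : ℕ) = r j - 1) := by
          intro hcon
          have hmem : j ∈ J₀.filter fun j => (ℓ j : ℕ) = r j - 1 :=
            Finset.mem_filter.2 ⟨hj, hcon⟩
          rw [Finset.card_eq_zero.1 hd] at hmem
          simp at hmem
        omega
      have hfib : ∀ a : Fin (r k),
          marg r y J (Function.update ℓ k a)
            = marg r y J (Function.update ℓ k ⟨0, hrk0⟩) := by
        intro a
        rcases Nat.eq_zero_or_pos (a : ℕ) with ha | ha
        · have : a = ⟨0, hrk0⟩ := Fin.ext ha
          rw [this]
        · set v : Fin n → ℕ := fun j => if j = k then (a : ℕ) - 1 else (ℓ j : ℕ) with hv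
          have hvlt : ∀ j ∈ J, v j < r j - 1 := by
            intro j hj
            by_cases hjk : j = k
            · subst hjk; simp only [hv, if_pos rfl]; have := a.isLt; omega
            · simp only [hv, if_neg hjk]; exact htop j (Finset.mem_erase.2 ⟨hjk, hj⟩)
          have hfil := mkRho_filter (r := r) J v hvlt
          have h10 : 1 ≤ (Finset.univ.filter fun j => (mkRho r J v hvlt j).isSome).card := by
            rw [hfil]; exact Finset.card_pos.2 hJne
          have hle : (Finset.univ.filter fun j => (mkRho r J v hvlt j).isSome).card ≤ t := by
            rw [hfil]; exact hJt
          have hzero := H (mkRho r J v hvlt) h10 hle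
          have h0 : ∀ j ∈ J, j ≠ J.max' hJne → ∀ h : (mkRho r J v hvlt j).isSome,
              ((Function.update ℓ k ⟨0, hrk0⟩ : ∀ j, Fin (r j)) j : ℕ)
                = (((mkRho r J v hvlt j).get h) : ℕ) := by
            intro j hj hne h
            rw [Function.update_of_ne hne, mkRho_get J v hvlt hj h]
            simp [hv, hne, hk]
          have h1 : ∀ j ∈ J, j ≠ J.max' hJne → ∀ h : (mkRho r J v hvlt j).isSome,
              ((Function.update ℓ k a : ∀ j, Fin (r j)) j : ℕ)
                = (((mkRho r J v hvlt j).get h) : ℕ) := by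
            intro j hj hne h
            rw [Function.update_of_ne hne, mkRho_get J v hvlt hj h]
            simp [hv, hne, hk]
          have h0k : ((Function.update ℓ k ⟨0, hrk0⟩ : ∀ j, Fin (r j)) k : ℕ) = 0 := by
            rw [Function.update_self]
          have h1k : ∀ h : (mkRho r J v hvlt k).isSome,
              ((Function.update ℓ k a : ∀ j, Fin (r j)) k : ℕ)
                = (((mkRho r J v hvlt k).get h) : ℕ) + 1 := by
            intro h
            rw [Function.update_self, mkRho_get J v hvlt hkJ h]
            simp only [hv, if_pos rfl]
            omega
          have hdiff := contrast_eq_sub y (mkRho r J v hvlt) J hfil hJne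
            (Function.update ℓ k ⟨0, hrk0⟩) (Function.update ℓ k a) h0 h1 h0k h1k
          rw [hzero] at hdiff
          linarith
      calc marg r y J ℓ * (r k : ℚ)
          = marg r y J (Function.update ℓ k ⟨0, hrk0⟩) * (r k : ℚ) := by
            rw [← hfib (ℓ k), Function.update_eq_self]
        _ = ∑ _a : Fin (r k), marg r y J (Function.update ℓ k ⟨0, hrk0⟩) := by
            simp [Finset.card_univ, mul_comm]
        _ = ∑ a : Fin (r k), marg r y J (Function.update ℓ k a) :=
            (Finset.sum_congr rfl (fun a _ => hfib a)).symm
        _ = marg r y J₀ ℓ := (marg_erase hkJ ℓ).symm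
    | succ d ihd =>
      intro ℓ hd
      have hne : (J₀.filter fun j => (ℓ j : ℕ) = r j - 1).Nonempty :=
        Finset.card_pos.1 (by omega)
      obtain ⟨js, hjs⟩ := hne
      have hjsJ₀ : js ∈ J₀ := (Finset.mem_filter.1 hjs).1
      have hjstop : (ℓ js : ℕ) = r js - 1 := (Finset.mem_filter.1 hjs).2
      have hjsk : js ≠ k := (Finset.mem_erase.1 hjsJ₀).1
      have hjsJ : js ∈ J := Finset.mem_of_mem_erase hjsJ₀
      have hIHa : ∀ a : Fin (r js), a ≠ ℓ js →
          marg r y J (Function.update ℓ js a) * (r k : ℚ)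
            = marg r y J₀ (Function.update ℓ js a) := by
        intro a hane
        apply ihd
        have hfeq : (J₀.filter fun j =>
            ((Function.update ℓ js a : ∀ j, Fin (r j)) j : ℕ) = r j - 1)
            = (J₀.filter fun j => (ℓ j : ℕ) = r j - 1).erase js := by
          ext x
          simp only [Finset.mem_filter, Finset.mem_erase]
          constructor
          · rintro ⟨hx, hxx⟩
            rcases eq_or_ne x js with rfl | hxne
            · rw [Function.update_self] at hxx
              exact absurd (Fin.ext (hxx.trans hjstop.symm)) hane
            · rw [Function.update_of_ne hxne] at hxx; exact ⟨hxne, hx, hxx⟩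
          · rintro ⟨hxne, hx, hxx⟩
            exact ⟨hx, by rw [Function.update_of_ne hxne]; exact hxx⟩
        rw [hfeq, Finset.card_erase_of_mem hjs, hd]
        omega
      have hkJ' : k ∈ J.erase js := Finset.mem_erase.2 ⟨hjsk.symm, hkJ⟩
      have hssub1 : J.erase js ⊂ J := Finset.erase_ssubset hjsJ
      have hOIH1 := ih (J.erase js) hssub1
        (le_trans (Finset.card_le_card hssub1.subset) hJt)
      have hssub2 : J₀.erase js ⊂ J :=
        lt_of_le_of_lt (Finset.erase_subset js J₀) hJ₀sub
      have hOIH2 := ih (J₀.erase js) hssub2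
        (le_trans (Finset.card_le_card hssub2.subset) hJt)
      have hP : (0:ℚ) < ∏ j ∈ (J₀.erase js), (r j : ℚ) :=
        Finset.prod_pos (fun j _ => by have := hr j; positivity)
      have hcomm : (J.erase js).erase k = J₀.erase js := by
        ext x
        simp only [Finset.mem_erase, hJ₀]
        tauto
      have hprodeq : ∏ j ∈ J.erase js, (r j : ℚ)
          = (r k : ℚ) * ∏ j ∈ J₀.erase js, (r j : ℚ) := by
        rw [← hcomm]
        exact (Finset.mul_prod_erase _ _ hkJ').symm
      have he : marg r y (J.erase js) ℓ * (r k : ℚ) = marg r y (J₀.erase js) ℓ := by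
        have e1 := hOIH1 ℓ
        have e2 := hOIH2 ℓ
        rw [hprodeq] at e1
        have e3 : (marg r y (J.erase js) ℓ * (r k : ℚ)) * ∏ j ∈ J₀.erase js, (r j : ℚ)
            = marg r y (J₀.erase js) ℓ * ∏ j ∈ J₀.erase js, (r j : ℚ) := by
          rw [e2, ← e1]; ring
        exact mul_right_cancel₀ (ne_of_gt hP) e3
      have rec1 := marg_erase (y := y) hjsJ ℓ
      have rec2 := marg_erase (y := y) (show js ∈ J₀ from hjsJ₀) ℓ
      have split1 : ∑ a : Fin (r js), marg r y J (Function.update ℓ js a)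
          = marg r y J ℓ
            + ∑ a ∈ Finset.univ.erase (ℓ js), marg r y J (Function.update ℓ js a) := by
        rw [← Finset.add_sum_erase Finset.univ _ (Finset.mem_univ (ℓ js)),
          Function.update_eq_self]
      have split2 : ∑ a : Fin (r js), marg r y J₀ (Function.update ℓ js a)
          = marg r y J₀ ℓ
            + ∑ a ∈ Finset.univ.erase (ℓ js), marg r y J₀ (Function.update ℓ js a) := by
        rw [← Finset.add_sum_erase Finset.univ _ (Finset.mem_univ (ℓ js)),
          Function.update_eq_self]
      have hsum3 : (∑ a ∈ Finset.univ.erase (ℓ js),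
            marg r y J (Function.update ℓ js a)) * (r k : ℚ)
          = ∑ a ∈ Finset.univ.erase (ℓ js), marg r y J₀ (Function.update ℓ js a) := by
        rw [Finset.sum_mul]
        exact Finset.sum_congr rfl (fun a ha => hIHa a (Finset.ne_of_mem_erase ha))
      have he2 : marg r y (J₀.erase js) ℓ
          = marg r y J₀ ℓ
            + ∑ a ∈ Finset.univ.erase (ℓ js), marg r y J₀ (Function.update ℓ js a) :=
        rec2.trans split2
      rw [rec1, split1, add_mul, hsum3] at he
      linarith [he, he2]
  intro ℓ
  have hprod : ∏ j ∈ J, (r j : ℚ) = (r k : ℚ) * ∏ j ∈ J₀, (r j : ℚ) :=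
    (Finset.mul_prod_erase J _ hkJ).symm
  rw [hprod, show marg r y J ℓ * ((r k : ℚ) * ∏ j ∈ J₀, (r j : ℚ))
      = (marg r y J ℓ * (r k : ℚ)) * ∏ j ∈ J₀, (r j : ℚ) by ring, key ℓ]
  exact IH0 ℓ

end Aux

/-- A 0/1 response `y` on `I = [r₁] × ⋯ × [rₙ]` defines a fraction of size `s` that is
orthogonal of strength `t` (every combination of levels of any `t` factors appears
`s / ∏_{j∈J} rⱼ` times) iff `Σᵢ y(i) = s` and all contrast rows `c_{J(ĩ)}` with
`1 ≤ |J| ≤ t` annihilate `y`. -/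
theorem orthogonal_strength_iff_contrasts (n t s : ℕ) (r : Fin n → ℕ)
    (hr : ∀ j, 2 ≤ r j) (ht : t ≤ n)
    (y : (∀ j, Fin (r j)) → ℚ) (hy : ∀ i, y i = 0 ∨ y i = 1)
    (hs : ∀ J : Finset (Fin n), J.card = t → (∏ j ∈ J, r j) ∣ s) :
    ((∑ i, y i) = (s : ℚ) ∧
      ∀ J : Finset (Fin n), J.card = t → ∀ ℓ : ∀ j, Fin (r j),
        (Finset.univ.filter fun i : ∀ j, Fin (r j) =>
            (∀ j ∈ J, i j = ℓ j) ∧ y i = 1).card * ∏ j ∈ J, r j = s) ↔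
    ((∑ i, y i) = (s : ℚ) ∧
      ∀ ρ : ∀ j, Option (Fin (r j - 1)),
        1 ≤ (Finset.univ.filter fun j => (ρ j).isSome).card →
        (Finset.univ.filter fun j => (ρ j).isSome).card ≤ t →
        ∑ i, contrastRow n r ρ i * y i = 0) := by
  classical
  have hr0 : ∀ j, 0 < r j := fun j => by have := hr j; omega
  have margcard : ∀ (J : Finset (Fin n)) (ℓ : ∀ j, Fin (r j)),
      marg r y J ℓ = ((Finset.univ.filter fun i : ∀ j, Fin (r j) =>
        (∀ j ∈ J, i j = ℓ j) ∧ y i = 1).card : ℚ) := by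
    intro J ℓ
    rw [marg_card hy J ℓ]
  constructor
  · rintro ⟨hsum, hcount⟩
    refine ⟨hsum, ?_⟩
    intro ρ h1c h2c
    have hJ'ne : (Finset.univ.filter fun j => (ρ j).isSome).Nonempty :=
      Finset.card_pos.1 h1c
    obtain ⟨J, hsub, -, hJcard⟩ := Finset.exists_subsuperset_card_eq
      (Finset.subset_univ (Finset.univ.filter fun j => (ρ j).isSome)) h2c
      (by rw [Finset.card_univ, Fintype.card_fin]; exact ht)
    have hJconst : ∀ ℓ, marg r y J ℓ * ∏ j ∈ J, (r j : ℚ) = (s : ℚ) := by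
      intro ℓ
      have h := congrArg (fun m : ℕ => (m : ℚ)) (hcount J hJcard ℓ)
      push_cast at h
      rw [margcard J ℓ]
      exact h
    have hconst := marg_const_subset hr hsub hJconst
    set J' : Finset (Fin n) := Finset.univ.filter fun j => (ρ j).isSome with hJ'
    set k : Fin n := J'.max' hJ'ne with hk
    have hkJ' : k ∈ J' := J'.max'_mem hJ'ne
    have hkS : (ρ k).isSome := (Finset.mem_filter.1 hkJ').2
    set ℓb : ∀ j, Fin (r j) := fun j =>
      if h : (ρ j).isSome then
        ⟨((ρ j).get h : ℕ), by have := ((ρ j).get h).isLt; omega⟩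
      else ⟨0, hr0 j⟩ with hℓb
    set ℓ0 : ∀ j, Fin (r j) := Function.update ℓb k ⟨0, hr0 k⟩ with hℓ0
    set ℓ1 : ∀ j, Fin (r j) := Function.update ℓb k
      ⟨((ρ k).get hkS : ℕ) + 1, by have := ((ρ k).get hkS).isLt; omega⟩ with hℓ1
    have H0 : ∀ j ∈ J', j ≠ J'.max' hJ'ne → ∀ h : (ρ j).isSome,
        (ℓ0 j : ℕ) = ((ρ j).get h : ℕ) := by
      intro j hj hne h
      rw [hℓ0, Function.update_of_ne hne, hℓb]
      simp only [dif_pos h]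
    have H1 : ∀ j ∈ J', j ≠ J'.max' hJ'ne → ∀ h : (ρ j).isSome,
        (ℓ1 j : ℕ) = ((ρ j).get h : ℕ) := by
      intro j hj hne h
      rw [hℓ1, Function.update_of_ne hne, hℓb]
      simp only [dif_pos h]
    have H0k : (ℓ0 k : ℕ) = 0 := by
      rw [hℓ0, Function.update_self]
    have H1k : ∀ h : (ρ k).isSome, (ℓ1 k : ℕ) = ((ρ k).get h : ℕ) + 1 := by
      intro h
      rw [hℓ1, Function.update_self]
    rw [contrast_eq_sub y ρ J' hJ'.symm hJ'ne ℓ0 ℓ1 H0 H1 H0k H1k]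
    have e0 := hconst ℓ0
    have e1 := hconst ℓ1
    have hPne : (∏ j ∈ J', (r j : ℚ)) ≠ 0 :=
      ne_of_gt (Finset.prod_pos (fun j _ => by have := hr j; positivity))
    have : marg r y J' ℓ0 = marg r y J' ℓ1 :=
      mul_right_cancel₀ hPne (e0.trans e1.symm)
    rw [this, sub_self]
  · rintro ⟨hsum, hcontr⟩
    refine ⟨hsum, ?_⟩
    intro J hJcard ℓ
    have h := marg_const_of_contrasts hr y t hcontr J (le_of_eq hJcard) ℓ
    rw [hsum, margcard J ℓ] at h
    have h' : (((Finset.univ.filter fun i : ∀ j, Fin (r j) =>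
        (∀ j ∈ J, i j = ℓ j) ∧ y i = 1).card * ∏ j ∈ J, r j : ℕ) : ℚ) = ((s : ℕ) : ℚ) := by
      push_cast
      exact h
    exact_mod_cast h'
end

section
/- Let D = {−1,1}^n with n ≥ 2, and let F ⊆ D be a fraction whose indicator function f = Σ_a θ_a x^a satisfies θ_a = 0 for all a with 1 ≤ Σ_j a_j ≤ 2 (all degree-1 and degree-2 coefficients vanish). Then F is an orthogonal design of strength 2: for every pair j ≠ k, each of the four level combinations (−1,−1), (−1,1), (1,−1), (1,1) appears in exactly |F|/4 points of F. -/
open MvPolynomial Finset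


noncomputable def sgnv {n : ℕ} (b : Fin n → Fin 2) : Fin n → ℚ :=
  fun j => (-1 : ℚ) ^ (b j : ℕ)

lemma sgnv_pm {n : ℕ} (b : Fin n → Fin 2) : ∀ j, sgnv b j = -1 ∨ sgnv b j = 1 := by
  intro j
  rcases Nat.even_or_odd ((b j : ℕ)) with he | ho
  · right; simp [sgnv, he.neg_one_pow]
  · left; simp [sgnv, ho.neg_one_pow]

lemma sgnv_inj {n : ℕ} : Function.Injective (sgnv (n := n)) := by
  intro b b' h
  funext j
  have hj := congrFun h j
  simp only [sgnv] at hj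
  have h1 : (b j : ℕ) < 2 := (b j).isLt
  have h2 : (b' j : ℕ) < 2 := (b' j).isLt
  apply Fin.ext
  rcases Nat.even_or_odd (b j : ℕ) with he | ho <;>
    rcases Nat.even_or_odd (b' j : ℕ) with he' | ho'
  · obtain ⟨x, hx⟩ := he; obtain ⟨y, hy⟩ := he'; omega
  · rw [he.neg_one_pow, ho'.neg_one_pow] at hj; norm_num at hj
  · rw [ho.neg_one_pow, he'.neg_one_pow] at hj; norm_num at hj
  · obtain ⟨x, hx⟩ := ho; obtain ⟨y, hy⟩ := ho'; omega

lemma orth (n : ℕ) (a a' : Fin n → Fin 2) :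
    ∑ b : Fin n → Fin 2, ∏ j, (-1 : ℚ) ^ ((b j : ℕ) * ((a' j : ℕ) + (a j : ℕ)))
      = if a' = a then (2 : ℚ) ^ n else 0 := by
  rw [← Fintype.piFinset_univ,
    ← Finset.prod_univ_sum (t := fun _ => (Finset.univ : Finset (Fin 2)))
      (f := fun j v => (-1 : ℚ) ^ ((v : ℕ) * ((a' j : ℕ) + (a j : ℕ))))]
  by_cases h : a' = a
  · subst h
    simp only [if_pos rfl]
    have h2 : ∀ j : Fin n, ∑ v : Fin 2, (-1 : ℚ) ^ ((v : ℕ) * ((a' j : ℕ) + (a' j : ℕ))) = 2 := by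
      intro j
      rw [Fin.sum_univ_two]
      simp only [Fin.val_zero, Fin.val_one, Nat.zero_mul, Nat.one_mul, pow_zero]
      rw [Even.neg_one_pow ⟨(a' j : ℕ), rfl⟩]
      norm_num
    simp [h2]
  · rw [if_neg h]
    obtain ⟨j, hj⟩ : ∃ j, a' j ≠ a j := by
      by_contra hc; push_neg at hc; exact h (funext hc)
    apply Finset.prod_eq_zero (Finset.mem_univ j)
    have hv : (a' j : ℕ) + (a j : ℕ) = 1 := by
      have h1 : (a' j : ℕ) < 2 := (a' j).isLt
      have h2 : (a j : ℕ) < 2 := (a j).isLt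
      have h3 : (a' j : ℕ) ≠ (a j : ℕ) := fun hc => hj (Fin.val_injective hc)
      omega
    rw [Fin.sum_univ_two]
    norm_num [hv]

lemma key_sum (n : ℕ) (F : Finset (Fin n → ℚ))
    (hF : ∀ d ∈ F, ∀ j, d j = -1 ∨ d j = 1)
    (θ : (Fin n → Fin 2) → ℚ)
    (hθ : ∀ d : Fin n → ℚ, (∀ j, d j = -1 ∨ d j = 1) →
      eval d (tlPoly n θ) = if d ∈ F then 1 else 0)
    (a : Fin n → Fin 2) :
    ∑ d ∈ F, ∏ j, d j ^ (a j : ℕ) = 2 ^ n * θ a := by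
  have hFim : F = Finset.image sgnv ((Finset.univ : Finset (Fin n → Fin 2)).filter
      fun b => sgnv b ∈ F) := by
    ext d
    simp only [Finset.mem_image, Finset.mem_filter, Finset.mem_univ, true_and]
    constructor
    · intro hd
      have hsg : sgnv (fun i => if d i = 1 then (0 : Fin 2) else 1) = d := by
        funext i
        simp only [sgnv]
        rcases hF d hd i with h | h <;> rw [h] <;> norm_num
      exact ⟨_, by rw [hsg]; exact hd, hsg⟩
    · rintro ⟨b, hb, rfl⟩; exact hb
  have heval : ∀ b : Fin n → Fin 2,
      eval (sgnv b) (tlPoly n θ) = ∑ a' : Fin n → Fin 2, θ a' * ∏ j, sgnv b j ^ (a' j : ℕ) := by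
    intro b
    simp [tlPoly, map_sum, eval_prod]
  calc ∑ d ∈ F, ∏ j, d j ^ (a j : ℕ)
      = ∑ b ∈ (Finset.univ : Finset (Fin n → Fin 2)).filter (fun b => sgnv b ∈ F),
          ∏ j, sgnv b j ^ (a j : ℕ) := by
        conv_lhs => rw [hFim]
        rw [Finset.sum_image (fun x _ y _ h => sgnv_inj h)]
    _ = ∑ b : Fin n → Fin 2, (if sgnv b ∈ F then (1:ℚ) else 0) * ∏ j, sgnv b j ^ (a j : ℕ) := by
        rw [Finset.sum_filter]
        exact Finset.sum_congr rfl fun b _ => by split <;> simp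
    _ = ∑ b : Fin n → Fin 2,
          (∑ a' : Fin n → Fin 2, θ a' * ∏ j, sgnv b j ^ (a' j : ℕ)) *
            ∏ j, sgnv b j ^ (a j : ℕ) := by
        refine Finset.sum_congr rfl fun b _ => ?_
        rw [← heval b, hθ (sgnv b) (sgnv_pm b)]
    _ = ∑ a' : Fin n → Fin 2, θ a' *
          ∑ b : Fin n → Fin 2, ∏ j, (-1:ℚ) ^ ((b j : ℕ) * ((a' j : ℕ) + (a j : ℕ))) := by
        simp only [Finset.sum_mul]
        rw [Finset.sum_comm]
        refine Finset.sum_congr rfl fun a' _ => ?_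
        rw [Finset.mul_sum]
        refine Finset.sum_congr rfl fun b _ => ?_
        rw [mul_assoc, ← Finset.prod_mul_distrib]
        congr 1
        refine Finset.prod_congr rfl fun i _ => ?_
        simp only [sgnv]
        rw [← pow_mul, ← pow_mul, ← pow_add, ← Nat.mul_add]
    _ = 2 ^ n * θ a := by
        simp only [orth]
        rw [Finset.sum_eq_single a]
        · simp [mul_comm]
        · intro b _ hb; simp [hb]
        · intro h; exact absurd (Finset.mem_univ a) h

/-- If all degree-1 and degree-2 coefficients of the indicator function of `F ⊆ {-1,1}ⁿ`
vanish, then `F` is an orthogonal design of strength 2: for every pair of distinct factors,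
each of the four level combinations appears in exactly `|F|/4` points of `F`. -/
theorem strength_two_of_low_coeffs_vanish (n : ℕ) (hn : 2 ≤ n)
    (F : Finset (Fin n → ℚ))
    (hF : ∀ d ∈ F, ∀ j, d j = -1 ∨ d j = 1)
    (θ : (Fin n → Fin 2) → ℚ)
    (hθ : ∀ d : Fin n → ℚ, (∀ j, d j = -1 ∨ d j = 1) →
      eval d (tlPoly n θ) = if d ∈ F then 1 else 0)
    (hzero : ∀ a : Fin n → Fin 2,
      1 ≤ ∑ j, (a j : ℕ) → (∑ j, (a j : ℕ)) ≤ 2 → θ a = 0) :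
    ∀ j k : Fin n, j ≠ k → ∀ ε δ : ℚ, (ε = -1 ∨ ε = 1) → (δ = -1 ∨ δ = 1) →
      4 * (F.filter fun d => d j = ε ∧ d k = δ).card = F.card := by
  intro j k hjk ε δ hε hδ
  classical
  set a1 : Fin n → Fin 2 := fun i => if i = j then 1 else 0 with ha1
  set a2 : Fin n → Fin 2 := fun i => if i = k then 1 else 0 with ha2
  set a3 : Fin n → Fin 2 := fun i => if i = j ∨ i = k then 1 else 0 with ha3
  have hsplit : ∀ i, (a3 i : ℕ) = (a1 i : ℕ) + (a2 i : ℕ) := by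
    intro i
    by_cases h1 : i = j <;> by_cases h2 : i = k
    · exact absurd (h1.symm.trans h2) hjk
    · simp [ha1, ha2, ha3, h1, h2, hjk, hjk.symm]
    · simp [ha1, ha2, ha3, h1, h2, hjk, hjk.symm]
    · simp [ha1, ha2, ha3, h1, h2, hjk, hjk.symm]
  have deg1 : ∑ i, (a1 i : ℕ) = 1 := by
    rw [Finset.sum_eq_single j]
    · simp [ha1]
    · intro i _ hi; simp [ha1, hi]
    · intro h; exact absurd (Finset.mem_univ j) h
  have deg2 : ∑ i, (a2 i : ℕ) = 1 := by
    rw [Finset.sum_eq_single k]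
    · simp [ha2]
    · intro i _ hi; simp [ha2, hi]
    · intro h; exact absurd (Finset.mem_univ k) h
  have deg3 : ∑ i, (a3 i : ℕ) = 2 := by
    simp only [hsplit, Finset.sum_add_distrib, deg1, deg2]
  have e1 : ∀ d : Fin n → ℚ, ∏ i, d i ^ (a1 i : ℕ) = d j := by
    intro d
    rw [Finset.prod_eq_single j]
    · simp [ha1]
    · intro i _ hi; simp [ha1, hi]
    · intro h; exact absurd (Finset.mem_univ j) h
  have e2 : ∀ d : Fin n → ℚ, ∏ i, d i ^ (a2 i : ℕ) = d k := by
    intro d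
    rw [Finset.prod_eq_single k]
    · simp [ha2]
    · intro i _ hi; simp [ha2, hi]
    · intro h; exact absurd (Finset.mem_univ k) h
  have e3 : ∀ d : Fin n → ℚ, ∏ i, d i ^ (a3 i : ℕ) = d j * d k := by
    intro d
    calc ∏ i, d i ^ (a3 i : ℕ) = ∏ i, d i ^ (a1 i : ℕ) * d i ^ (a2 i : ℕ) := by
          refine Finset.prod_congr rfl fun i _ => ?_
          rw [hsplit i, pow_add]
      _ = (∏ i, d i ^ (a1 i : ℕ)) * ∏ i, d i ^ (a2 i : ℕ) := Finset.prod_mul_distrib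
      _ = d j * d k := by rw [e1, e2]
  have S1 : ∑ d ∈ F, d j = 0 := by
    have := key_sum n F hF θ hθ a1
    simp only [e1] at this
    rw [this, hzero a1 (by omega) (by omega)]
    ring
  have S2 : ∑ d ∈ F, d k = 0 := by
    have := key_sum n F hF θ hθ a2
    simp only [e2] at this
    rw [this, hzero a2 (by omega) (by omega)]
    ring
  have S3 : ∑ d ∈ F, d j * d k = 0 := by
    have := key_sum n F hF θ hθ a3
    simp only [e3] at this
    rw [this, hzero a3 (by omega) (by omega)]
    ring
  have hpoint : ∀ d ∈ F, (1 + ε * d j) * (1 + δ * d k)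
      = 4 * (if d j = ε ∧ d k = δ then (1:ℚ) else 0) := by
    intro d hd
    rcases hF d hd j with h1 | h1 <;> rcases hF d hd k with h2 | h2 <;>
      rcases hε with he | he <;> rcases hδ with hd' | hd' <;>
        rw [h1, h2, he, hd'] <;> norm_num
  have hcount : ((F.filter fun d => d j = ε ∧ d k = δ).card : ℚ)
      = ∑ d ∈ F, (if d j = ε ∧ d k = δ then (1:ℚ) else 0) := by
    rw [Finset.sum_boole]
  have hmain : (4 : ℚ) * ((F.filter fun d => d j = ε ∧ d k = δ).card : ℚ) = (F.card : ℚ) := by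
    rw [hcount, Finset.mul_sum]
    rw [show (∑ d ∈ F, 4 * (if d j = ε ∧ d k = δ then (1:ℚ) else 0))
        = ∑ d ∈ F, (1 + ε * d j) * (1 + δ * d k) from
      Finset.sum_congr rfl fun d hd => (hpoint d hd).symm]
    have : ∀ d ∈ F, (1 + ε * d j) * (1 + δ * d k)
        = 1 + ε * d j + δ * d k + ε * δ * (d j * d k) := fun d _ => by ring
    rw [Finset.sum_congr rfl this]
    simp only [Finset.sum_add_distrib, ← Finset.mul_sum, S1, S2, S3, Finset.sum_const,
      nsmul_eq_mul, mul_one, mul_zero, add_zero]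
  exact_mod_cast hmain
end
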